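/- With R, δ_k, and R̄ defined as in the trace-modification construction, the function F(A) = A^H R̄_{|A|} A on unimodular strings has the diminishing-returns property: if B is a prefix of A with |A| ≤ N−1, then for every u ∈ ℂ with |u| = 1, F(B ⊕ (u)) − F(B) ≥ F(A ⊕ (u)) − F(A), where ⊕ denotes string concatenation. -/

import Mathlib

open Matrix

/-- `delta R k = Σ_{i<k} |r_{k i}|` (so `delta R 0 = 0`). -/
noncomputable def delta {N : ℕ} (R : Matrix (Fin N) (Fin N) ℂ) (k : Fin N) : ℝ :=
  ∑ i ∈ Finset.Iio k, ‖R k i‖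

/-- The modified diagonal entries `a_k = 2 δ_k + 4 Σ_{j>k} δ_j` (for the last index the
second sum is empty, giving `a_N = 2 δ_N`). -/
noncomputable def adiag {N : ℕ} (R : Matrix (Fin N) (Fin N) ℂ) (k : Fin N) : ℝ :=
  2 * delta R k + 4 * ∑ j ∈ Finset.Ioi k, delta R j

/-- `R̄`: same off-diagonal entries as `R`, with diagonal replaced by `a`. -/
noncomputable def Rbar {N : ℕ} (R : Matrix (Fin N) (Fin N) ℂ) : Matrix (Fin N) (Fin N) ℂ :=
  fun i j => if i = j then (adiag R i : ℂ) else R i j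

/-- `F m b = Cᴴ R̄_m C` where `C` is the prefix of length `m` of the string `b` and
`R̄_m` is the leading `m × m` principal submatrix of `R̄`. -/
noncomputable def Fval {N : ℕ} (R : Matrix (Fin N) (Fin N) ℂ) (m : ℕ) (hm : m ≤ N)
    (b : Fin N → ℂ) : ℝ :=
  (star (fun i : Fin m => b (Fin.castLE hm i)) ⬝ᵥ
      ((Rbar R).submatrix (Fin.castLE hm) (Fin.castLE hm)) *ᵥ
        fun i : Fin m => b (Fin.castLE hm i)).re

lemma rbar_star {N : ℕ} (R : Matrix (Fin N) (Fin N) ℂ) (hR : R.IsHermitian) (i j : Fin N) :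
    (starRingEnd ℂ) (Rbar R i j) = Rbar R j i := by
  unfold Rbar
  by_cases h : i = j
  · subst h; simp
  · rw [if_neg h, if_neg (Ne.symm h)]
    exact hR.apply j i

lemma Fval_congr {N : ℕ} (R : Matrix (Fin N) (Fin N) ℂ) (m : ℕ) (hm : m ≤ N)
    (b b' : Fin N → ℂ) (h : ∀ i : Fin N, (i : ℕ) < m → b i = b' i) :
    Fval R m hm b = Fval R m hm b' := by
  unfold Fval
  simp only [dotProduct, mulVec, Pi.star_apply]
  congr 1
  apply Finset.sum_congr rfl
  intro i _
  rw [h (Fin.castLE hm i) i.isLt]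
  congr 1
  exact Finset.sum_congr rfl fun j _ => by rw [h (Fin.castLE hm j) j.isLt]

lemma Fval_succ {N : ℕ} (R : Matrix (Fin N) (Fin N) ℂ) (hR : R.IsHermitian)
    (m : ℕ) (h : m < N) (b : Fin N → ℂ) :
    Fval R (m+1) h b = Fval R m h.le b
      + adiag R ⟨m, h⟩ * Complex.normSq (b ⟨m, h⟩)
      + 2 * ((starRingEnd ℂ) (b ⟨m, h⟩) *
          ∑ j : Fin m, R ⟨m, h⟩ (Fin.castLE h.le j) * b (Fin.castLE h.le j)).re := by
  unfold Fval
  simp only [dotProduct, mulVec, Pi.star_apply, RCLike.star_def, submatrix_apply]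
  rw [Fin.sum_univ_castSucc]
  simp only [Fin.sum_univ_castSucc (n := m), Fin.castLE_castSucc]
  have hlast : Fin.castLE h (Fin.last m) = (⟨m, h⟩ : Fin N) := rfl
  rw [hlast]
  have hne : ∀ x : Fin m, ((⟨m, h⟩ : Fin N) : Fin N) ≠ Fin.castLE h.le x := by
    intro x
    exact Fin.ne_of_val_ne (by simpa using x.isLt.ne')
  have hRb1 : ∀ x : Fin m, Rbar R (⟨m, h⟩ : Fin N) (Fin.castLE h.le x) = R ⟨m, h⟩ (Fin.castLE h.le x) := by
    intro x; simp [Rbar, hne x]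
  have hRb2 : Rbar R (⟨m, h⟩ : Fin N) ⟨m, h⟩ = (adiag R ⟨m, h⟩ : ℂ) := by simp [Rbar]
  have key : (∑ x : Fin m, (starRingEnd ℂ) (b (Fin.castLE h.le x)) *
      (Rbar R (Fin.castLE h.le x) ⟨m, h⟩ * b ⟨m, h⟩))
      = (starRingEnd ℂ) ((starRingEnd ℂ) (b ⟨m, h⟩) *
          ∑ x : Fin m, Rbar R (⟨m, h⟩ : Fin N) (Fin.castLE h.le x) * b (Fin.castLE h.le x)) := by
    rw [_root_.map_mul, map_sum, Complex.conj_conj, Finset.mul_sum]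
    apply Finset.sum_congr rfl
    intro x _
    rw [_root_.map_mul, rbar_star R hR]
    ring
  simp only [mul_add, Finset.sum_add_distrib, Complex.add_re]
  rw [key, Complex.conj_re]
  simp only [hRb1, hRb2]
  have hD : ((starRingEnd ℂ) (b ⟨m, h⟩) * ((adiag R ⟨m, h⟩ : ℂ) * b ⟨m, h⟩)).re
      = adiag R ⟨m, h⟩ * Complex.normSq (b ⟨m, h⟩) := by
    have : (starRingEnd ℂ) (b ⟨m, h⟩) * ((adiag R ⟨m, h⟩ : ℂ) * b ⟨m, h⟩)
        = (adiag R ⟨m, h⟩ : ℂ) * ((Complex.normSq (b ⟨m, h⟩) : ℝ) : ℂ) := by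
      rw [← Complex.mul_conj]
      ring
    rw [this, ← Complex.ofReal_mul, Complex.ofReal_re]
  rw [hD]
  ring

lemma delta_nonneg {N : ℕ} (R : Matrix (Fin N) (Fin N) ℂ) (k : Fin N) : 0 ≤ delta R k :=
  Finset.sum_nonneg fun i _ => norm_nonneg _

lemma delta_eq_sum {N : ℕ} (R : Matrix (Fin N) (Fin N) ℂ) (m : ℕ) (h : m < N) :
    delta R ⟨m, h⟩ = ∑ j : Fin m, ‖R ⟨m, h⟩ (Fin.castLE h.le j)‖ := by
  rw [delta]
  refine (Finset.sum_bij' (fun (j : Fin N) (hj : j ∈ Finset.Iio ⟨m, h⟩) =>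
      (⟨(j : ℕ), by exact (Finset.mem_Iio.mp hj : j < (⟨m, h⟩ : Fin N))⟩ : Fin m))
    (fun (j : Fin m) _ => Fin.castLE h.le j) ?_ ?_ ?_ ?_ ?_).symm.symm
  · intro a ha; exact Finset.mem_univ _
  · intro a ha; simp [Finset.mem_Iio, Fin.lt_def]
  · intro a ha; rfl
  · intro a ha; rfl
  · intro a ha; rfl

lemma cross_bound {N : ℕ} (R : Matrix (Fin N) (Fin N) ℂ) (m : ℕ) (h : m < N)
    (b : Fin N → ℂ) (hb : ∀ j : Fin m, ‖b (Fin.castLE h.le j)‖ = 1)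
    (u : ℂ) (hu : ‖u‖ = 1) :
    |((starRingEnd ℂ) u *
        ∑ j : Fin m, R ⟨m, h⟩ (Fin.castLE h.le j) * b (Fin.castLE h.le j)).re|
      ≤ delta R ⟨m, h⟩ := by
  calc |((starRingEnd ℂ) u *
        ∑ j : Fin m, R ⟨m, h⟩ (Fin.castLE h.le j) * b (Fin.castLE h.le j)).re|
      ≤ ‖(starRingEnd ℂ) u *
        ∑ j : Fin m, R ⟨m, h⟩ (Fin.castLE h.le j) * b (Fin.castLE h.le j)‖ :=
        Complex.abs_re_le_norm _
    _ = ‖∑ j : Fin m, R ⟨m, h⟩ (Fin.castLE h.le j) * b (Fin.castLE h.le j)‖ := by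
        rw [norm_mul, Complex.norm_conj, hu, one_mul]
    _ ≤ ∑ j : Fin m, ‖R ⟨m, h⟩ (Fin.castLE h.le j) * b (Fin.castLE h.le j)‖ :=
        norm_sum_le _ _
    _ = ∑ j : Fin m, ‖R ⟨m, h⟩ (Fin.castLE h.le j)‖ := by
        refine Finset.sum_congr rfl fun j _ => ?_
        rw [norm_mul, hb j, mul_one]
    _ = delta R ⟨m, h⟩ := (delta_eq_sum R m h).symm

lemma adiag_ineq {N : ℕ} (R : Matrix (Fin N) (Fin N) ℂ) (k l : ℕ) (hkl : k < l) (hl : l < N) :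
    adiag R ⟨l, hl⟩ + 2 * delta R ⟨l, hl⟩ ≤ adiag R ⟨k, hkl.trans hl⟩ - 2 * delta R ⟨k, hkl.trans hl⟩ := by
  unfold adiag
  have hnot : (⟨l, hl⟩ : Fin N) ∉ Finset.Ioi (⟨l, hl⟩ : Fin N) := by simp
  have hsub : insert (⟨l, hl⟩ : Fin N) (Finset.Ioi ⟨l, hl⟩) ⊆ Finset.Ioi (⟨k, hkl.trans hl⟩ : Fin N) := by
    intro j hj
    rcases Finset.mem_insert.mp hj with rfl | hj
    · exact Finset.mem_Ioi.mpr (by simpa [Fin.lt_def] using hkl)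
    · exact Finset.mem_Ioi.mpr (lt_trans (by simpa [Fin.lt_def] using hkl) (Finset.mem_Ioi.mp hj))
  have hle : delta R ⟨l, hl⟩ + ∑ j ∈ Finset.Ioi (⟨l, hl⟩ : Fin N), delta R j
      ≤ ∑ j ∈ Finset.Ioi (⟨k, hkl.trans hl⟩ : Fin N), delta R j := by
    rw [← Finset.sum_insert hnot]
    exact Finset.sum_le_sum_of_subset_of_nonneg hsub fun j _ _ => delta_nonneg R j
  linarith

/-- Diminishing returns property of `F`: if `B` (length `k`) is a prefix of the unimodular
string `A` (length `l ≤ N − 1`), then for any unimodular `u`,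
`F(B ⊕ (u)) − F(B) ≥ F(A ⊕ (u)) − F(A)`. -/
theorem stmt_7 (N : ℕ) (R : Matrix (Fin N) (Fin N) ℂ) (hR : R.IsHermitian)
    (k l : ℕ) (hkl : k ≤ l) (hl : l < N)
    (b : Fin N → ℂ) (hb : ∀ i : Fin N, (i : ℕ) < l → ‖b i‖ = 1)
    (u : ℂ) (hu : ‖u‖ = 1) :
    Fval R (l + 1) hl (Function.update b ⟨l, hl⟩ u) - Fval R l hl.le b ≤
      Fval R (k + 1) (Nat.succ_le_of_lt (hkl.trans_lt hl))
          (Function.update b ⟨k, hkl.trans_lt hl⟩ u) -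
        Fval R k (hkl.trans hl.le) b := by
  rcases lt_or_eq_of_le hkl with hkl' | rfl
  swap
  · exact le_rfl
  have hk : k < N := hkl'.trans hl
  have hnormu : Complex.normSq u = 1 := by
    rw [← Complex.sq_norm, hu, one_pow]
  -- rewrite both successor values
  rw [Fval_succ R hR l hl (Function.update b ⟨l, hl⟩ u),
      Fval_succ R hR k hk (Function.update b ⟨k, hk⟩ u)]
  have hupd_l : ∀ i : Fin N, (i : ℕ) < l → Function.update b ⟨l, hl⟩ u i = b i := by
    intro i hi
    exact Function.update_of_ne (Fin.ne_of_val_ne hi.ne) _ _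
  have hupd_k : ∀ i : Fin N, (i : ℕ) < k → Function.update b ⟨k, hk⟩ u i = b i := by
    intro i hi
    exact Function.update_of_ne (Fin.ne_of_val_ne hi.ne) _ _
  rw [Fval_congr R l hl.le _ b hupd_l, Fval_congr R k hk.le _ b hupd_k,
      Function.update_self, Function.update_self, hnormu]
  have hsum_l : (∑ j : Fin l, R ⟨l, hl⟩ (Fin.castLE hl.le j) *
      Function.update b ⟨l, hl⟩ u (Fin.castLE hl.le j))
      = ∑ j : Fin l, R ⟨l, hl⟩ (Fin.castLE hl.le j) * b (Fin.castLE hl.le j) :=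
    Finset.sum_congr rfl fun j _ => by rw [hupd_l _ j.isLt]
  have hsum_k : (∑ j : Fin k, R ⟨k, hk⟩ (Fin.castLE hk.le j) *
      Function.update b ⟨k, hk⟩ u (Fin.castLE hk.le j))
      = ∑ j : Fin k, R ⟨k, hk⟩ (Fin.castLE hk.le j) * b (Fin.castLE hk.le j) :=
    Finset.sum_congr rfl fun j _ => by rw [hupd_k _ j.isLt]
  rw [hsum_l, hsum_k]
  have hbl : ∀ j : Fin l, ‖b (Fin.castLE hl.le j)‖ = 1 :=
    fun j => hb _ j.isLt
  have hbk : ∀ j : Fin k, ‖b (Fin.castLE hk.le j)‖ = 1 :=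
    fun j => hb _ (j.isLt.trans hkl')
  have h1 := abs_le.mp (cross_bound R l hl b hbl u hu)
  have h2 := abs_le.mp (cross_bound R k hk b hbk u hu)
  have h3 := adiag_ineq R k l hkl' hl
  linarith [h1.1, h1.2, h2.1, h2.2, h3]
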